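/- For φ ∈ (0, 2π) and z = a - ik ∈ ℂ, the limit as t → 0⁺ of tr(T_z R_φ e^{-tH}) on L²(ℝ) equals (1 − e^{-iφ})^{-1} · exp((i/4)(a² + k²)·cot(φ/2)). -/

import Mathlib

open Complex Filter

/-- Mehler's heat kernel `e^{-TH}(x,y) = (2π sinh T)^{-1/2} exp(−coth T·(x²+y²)/2 + xy/sinh T)`
for the harmonic oscillator `H = (1/2)(x² - d²/dx²)`, analytically continued to complex time
`T = t + iφ`; the branch of `(2π sinh T)^{-1/2}` is the analytic continuation from `T > 0`,
realized as `(2π sinh(T/2))^{-1/2}·(2 cosh(T/2))^{-1/2}` with principal powers. -/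
noncomputable def mehlerKernelC (T : ℂ) (x y : ℝ) : ℂ :=
  (2 * Real.pi * Complex.sinh (T / 2)) ^ (-(1 / 2) : ℂ) *
    (2 * Complex.cosh (T / 2)) ^ (-(1 / 2) : ℂ) *
    Complex.exp (-(Complex.cosh T / Complex.sinh T) * (((x : ℂ) ^ 2 + (y : ℂ) ^ 2) / 2)
      + (x : ℂ) * y / Complex.sinh T)

lemma sinh_form (x y : ℝ) :
    Complex.sinh ((x:ℂ) + (y:ℂ)*I) =
      ((Real.sinh x * Real.cos y : ℝ) : ℂ) + ((Real.cosh x * Real.sin y : ℝ) : ℂ) * I := by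
  rw [Complex.sinh_add, Complex.sinh_mul_I, Complex.cosh_mul_I, ← Complex.ofReal_sinh,
    ← Complex.ofReal_cosh, ← Complex.ofReal_sin, ← Complex.ofReal_cos]
  push_cast
  ring

lemma cosh_form (x y : ℝ) :
    Complex.cosh ((x:ℂ) + (y:ℂ)*I) =
      ((Real.cosh x * Real.cos y : ℝ) : ℂ) + ((Real.sinh x * Real.sin y : ℝ) : ℂ) * I := by
  rw [Complex.cosh_add, Complex.sinh_mul_I, Complex.cosh_mul_I, ← Complex.ofReal_sinh,
    ← Complex.ofReal_cosh, ← Complex.ofReal_sin, ← Complex.ofReal_cos]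
  push_cast
  ring

lemma sinh_re' (x y : ℝ) : (Complex.sinh ((x:ℂ) + (y:ℂ)*I)).re = Real.sinh x * Real.cos y := by
  rw [sinh_form]
  simp only [Complex.add_re, Complex.add_im, Complex.mul_re, Complex.mul_im,
    Complex.I_re, Complex.I_im, Complex.ofReal_re, Complex.ofReal_im]
  ring

lemma sinh_im' (x y : ℝ) : (Complex.sinh ((x:ℂ) + (y:ℂ)*I)).im = Real.cosh x * Real.sin y := by
  rw [sinh_form]
  simp only [Complex.add_re, Complex.add_im, Complex.mul_re, Complex.mul_im,
    Complex.I_re, Complex.I_im, Complex.ofReal_re, Complex.ofReal_im]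
  ring

lemma cosh_re' (x y : ℝ) : (Complex.cosh ((x:ℂ) + (y:ℂ)*I)).re = Real.cosh x * Real.cos y := by
  rw [cosh_form]
  simp only [Complex.add_re, Complex.add_im, Complex.mul_re, Complex.mul_im,
    Complex.I_re, Complex.I_im, Complex.ofReal_re, Complex.ofReal_im]
  ring

lemma cosh_im' (x y : ℝ) : (Complex.cosh ((x:ℂ) + (y:ℂ)*I)).im = Real.sinh x * Real.sin y := by
  rw [cosh_form]
  simp only [Complex.add_re, Complex.add_im, Complex.mul_re, Complex.mul_im,
    Complex.I_re, Complex.I_im, Complex.ofReal_re, Complex.ofReal_im]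
  ring

lemma log_div_of_im_pos {c s : ℂ} (hc : 0 < c.im) (hs : 0 < s.im) :
    Complex.log (c/s) = Complex.log c - Complex.log s := by
  have hc0 : c ≠ 0 := fun h => by rw [h] at hc; simp at hc
  have hs0 : s ≠ 0 := fun h => by rw [h] at hs; simp at hs
  have hargs2 : s.arg < Real.pi := Complex.arg_lt_pi_iff.2 (Or.inr hs.ne')
  have hargs1 : 0 ≤ s.arg := Complex.arg_nonneg_iff.2 hs.le
  have hargc1 : 0 ≤ c.arg := Complex.arg_nonneg_iff.2 hc.le
  have hargc2 : c.arg < Real.pi := Complex.arg_lt_pi_iff.2 (Or.inr hc.ne')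
  have hIoc : c.arg + (s⁻¹).arg ∈ Set.Ioc (-Real.pi) Real.pi := by
    rw [Complex.arg_inv, if_neg hargs2.ne]
    constructor <;> [linarith; linarith]
  rw [div_eq_mul_inv, Complex.log_mul hc0 (inv_ne_zero hs0) hIoc,
    Complex.log_inv s hargs2.ne, ← sub_eq_add_neg]

lemma prefactorA {s c : ℂ} (hs : 0 < s.im) (hc : 0 < c.im) :
    (2 * (Real.pi:ℂ) * s) ^ (-(1 / 2) : ℂ) * (2 * c) ^ (-(1 / 2) : ℂ) *
      ((Real.pi:ℂ) / (s/c)) ^ ((1 / 2) : ℂ) = (2*s)⁻¹ := by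
  have hc0 : c ≠ 0 := fun h => by rw [h] at hc; simp at hc
  have hs0 : s ≠ 0 := fun h => by rw [h] at hs; simp at hs
  have hpi : (0:ℝ) < Real.pi := Real.pi_pos
  have h2pi : (0:ℝ) < 2 * Real.pi := by linarith
  have h1 : (2 * (Real.pi:ℂ) * s) ≠ 0 := by
    apply mul_ne_zero (mul_ne_zero two_ne_zero _) hs0
    exact_mod_cast hpi.ne'
  have h2 : (2 * c : ℂ) ≠ 0 := mul_ne_zero two_ne_zero hc0
  have h3 : ((Real.pi:ℂ) / (s/c)) ≠ 0 :=
    div_ne_zero (by exact_mod_cast hpi.ne') (div_ne_zero hs0 hc0)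
  have hlog1 : Complex.log (2 * (Real.pi:ℂ) * s) = (Real.log (2*Real.pi) : ℂ) + Complex.log s := by
    rw [show (2 * (Real.pi:ℂ) * s) = ((2*Real.pi : ℝ) : ℂ) * s by push_cast; ring,
      Complex.log_ofReal_mul h2pi hs0]
  have hlog2 : Complex.log (2 * c) = (Real.log 2 : ℂ) + Complex.log c := by
    rw [show (2 * c : ℂ) = ((2:ℝ):ℂ) * c by push_cast; ring,
      Complex.log_ofReal_mul (by norm_num) hc0]
  have hlog3 : Complex.log ((Real.pi:ℂ) / (s/c))
      = (Real.log Real.pi : ℂ) + Complex.log c - Complex.log s := by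
    rw [show ((Real.pi:ℂ) / (s/c)) = ((Real.pi:ℝ):ℂ) * (c/s) by
        field_simp, Complex.log_ofReal_mul hpi (div_ne_zero hc0 hs0),
      log_div_of_im_pos hc hs]
    ring
  have hlog4 : Complex.log (2*s) = (Real.log 2 : ℂ) + Complex.log s := by
    rw [show (2 * s : ℂ) = ((2:ℝ):ℂ) * s by push_cast; ring,
      Complex.log_ofReal_mul (by norm_num) hs0]
  rw [Complex.cpow_def_of_ne_zero h1, Complex.cpow_def_of_ne_zero h2,
    Complex.cpow_def_of_ne_zero h3, ← Complex.exp_add, ← Complex.exp_add]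
  have : Complex.log (2 * ↑Real.pi * s) * -(1/2) + Complex.log (2*c) * -(1/2)
      + Complex.log ((Real.pi:ℂ)/(s/c)) * (1/2) = -(Complex.log (2*s)) := by
    rw [hlog1, hlog2, hlog3, hlog4, Real.log_mul (by norm_num) hpi.ne']
    push_cast
    ring
  rw [this, Complex.exp_neg, Complex.exp_log (mul_ne_zero two_ne_zero hs0)]

lemma bId {s c : ℂ} (hs0 : s ≠ 0) (hc0 : c ≠ 0) (h1 : c^2 - s^2 = 1) :
    (1 - (c^2+s^2)) / (2*s*c) = -(s/c) := by
  field_simp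
  linear_combination (-1 : ℂ) * h1

lemma expId (a k : ℝ) {s c : ℂ} (hs0 : s ≠ 0) (hc0 : c ≠ 0) (h1 : c^2 - s^2 = 1) :
    (-(c^2+s^2) * (a:ℂ)^2 / (2*(2*s*c)) - I*a*k/2)
      - ((a:ℂ)*((c^2+s^2)-1)/(2*s*c) + I*k)^2 / (4*((1 - (c^2+s^2))/(2*s*c)))
      = -((a:ℂ)^2 + (k:ℂ)^2) * c / (4*s) := by
  have h2 : 1 - (c^2+s^2) = -(2*s^2) := by linear_combination -h1
  have h3 : (c^2+s^2) - 1 = 2*s^2 := by linear_combination h1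
  rw [h2, h3, ← mul_div_assoc, div_div_eq_mul_div]
  have hI := Complex.I_sq
  have hsc : (2:ℂ)*s*c ≠ 0 := mul_ne_zero (mul_ne_zero two_ne_zero hs0) hc0
  have e1a : (a:ℂ)*(2*s^2)/(2*s*c) = (a:ℂ)*s/c := by
    rw [div_eq_div_iff hsc hc0]; ring
  have e1 : (a:ℂ)*(2*s^2)/(2*s*c) + I*k = ((a:ℂ)*s + I*k*c)/c := by
    rw [e1a, add_div, mul_div_cancel_right₀ _ hc0]
  rw [e1]
  have e2 : (((a:ℂ)*s + I*k*c)/c)^2 * (2*s*c) / (4*(-(2*s^2)))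
      = -(((a:ℂ)*s + I*k*c)^2/(4*s*c)) := by
    rw [div_pow, div_mul_eq_mul_div, div_div, ← neg_div,
      div_eq_div_iff (mul_ne_zero (pow_ne_zero 2 hc0)
          (mul_ne_zero (by norm_num) (neg_ne_zero.2 (mul_ne_zero two_ne_zero (pow_ne_zero 2 hs0)))))
        (mul_ne_zero (mul_ne_zero (by norm_num) hs0) hc0)]
    ring
  rw [e2]
  field_simp
  ring_nf
  simp only [hI]
  ring_nf

lemma div_re_pos_aux {x y : ℝ} (hx : 0 < x) (hy : 0 < Real.sin y) :
    0 < (Complex.sinh ((x:ℂ) + (y:ℂ)*I) / Complex.cosh ((x:ℂ) + (y:ℂ)*I)).re := by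
  have hc0 : Complex.cosh ((x:ℂ) + (y:ℂ)*I) ≠ 0 := fun h => by
    have h2 := cosh_im' x y
    rw [h] at h2
    simp only [Complex.zero_im] at h2
    nlinarith [Real.sinh_pos_iff.2 hx]
  rw [Complex.div_re, sinh_re', sinh_im', cosh_re', cosh_im', ← add_div]
  exact div_pos (by nlinarith [mul_pos (Real.sinh_pos_iff.2 hx) (Real.cosh_pos x),
    Real.sin_sq_add_cos_sq y]) (Complex.normSq_pos.2 hc0)


/-- For `φ ∈ (0,2π)` and `z = a - ik`, the limit as `t → 0⁺` of
`tr(T_z R_φ e^{-tH}) = e^{iφ/2}·tr(T_z e^{-(t+iφ)H})` equals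
`(1 − e^{-iφ})^{-1}·exp((i/4)(a² + k²)·cot(φ/2))`. -/
theorem heatTraceTzRphi_limit (a k φ : ℝ) (hφ : φ ∈ Set.Ioo 0 (2 * Real.pi)) :
    Tendsto
      (fun t : ℝ => Complex.exp (I * φ / 2) *
        ∫ x : ℝ, Complex.exp (I * ((k : ℂ) * x - a * k / 2)) *
          mehlerKernelC ((t : ℂ) + I * φ) (x - a) x)
      (nhdsWithin 0 (Set.Ioi 0))
      (nhds ((1 - Complex.exp (-I * φ))⁻¹ *
        Complex.exp ((I / 4) * ((a : ℂ) ^ 2 + (k : ℂ) ^ 2) *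
          ((Real.cos (φ / 2) / Real.sin (φ / 2) : ℝ) : ℂ)))) := by
  obtain ⟨hφ0, hφ2⟩ := hφ
  have hsin : 0 < Real.sin (φ/2) :=
    Real.sin_pos_of_pos_of_lt_pi (by linarith) (by linarith)
  set G : ℝ → ℂ := fun t =>
    Complex.exp (I * φ / 2) * ((2 * Complex.sinh (((t:ℂ) + I * φ)/2))⁻¹ *
      Complex.exp (-((a:ℂ)^2 + (k:ℂ)^2) * Complex.cosh (((t:ℂ) + I * φ)/2)
        / (4 * Complex.sinh (((t:ℂ) + I * φ)/2)))) with hGdef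
  have key : ∀ t : ℝ, t ∈ Set.Ioi (0:ℝ) →
      (Complex.exp (I * (φ:ℂ) / 2) * ∫ x : ℝ, Complex.exp (I * ((k : ℂ) * x - a * k / 2)) *
        mehlerKernelC ((t : ℂ) + I * φ) (x - a) x) = G t := by
    intro t ht
    rw [Set.mem_Ioi] at ht
    have hT2 : ((t:ℂ) + I*φ)/2 = ((t/2 : ℝ):ℂ) + ((φ/2 : ℝ):ℂ) * I := by push_cast; ring
    set s := Complex.sinh (((t:ℂ) + I*φ)/2) with hsdef
    set c := Complex.cosh (((t:ℂ) + I*φ)/2) with hcdef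
    have hs_im : 0 < s.im := by
      rw [hsdef, hT2, sinh_im']
      exact mul_pos (Real.cosh_pos _) hsin
    have hc_im : 0 < c.im := by
      rw [hcdef, hT2, cosh_im']
      exact mul_pos (Real.sinh_pos_iff.2 (by linarith)) hsin
    have hs0 : s ≠ 0 := fun h => by rw [h] at hs_im; simp at hs_im
    have hc0 : c ≠ 0 := fun h => by rw [h] at hc_im; simp at hc_im
    have h1 : c^2 - s^2 = 1 := by
      rw [hcdef, hsdef]; exact Complex.cosh_sq_sub_sinh_sq _
    have hS : Complex.sinh ((t:ℂ) + I*φ) = 2*s*c := by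
      rw [hsdef, hcdef, ← Complex.sinh_two_mul]
      congr 1; ring
    have hC : Complex.cosh ((t:ℂ) + I*φ) = c^2 + s^2 := by
      rw [hsdef, hcdef, ← Complex.cosh_two_mul]
      congr 1; ring
    have hSne : Complex.sinh ((t:ℂ) + I*φ) ≠ 0 := by
      rw [hS]; exact mul_ne_zero (mul_ne_zero two_ne_zero hs0) hc0
    have hb : (1 - Complex.cosh ((t:ℂ)+I*φ)) / Complex.sinh ((t:ℂ)+I*φ) = -(s/c) := by
      rw [hS, hC]; exact bId hs0 hc0 h1
    have hbre : ((1 - Complex.cosh ((t:ℂ)+I*φ)) / Complex.sinh ((t:ℂ)+I*φ)).re < 0 := by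
      rw [hb, Complex.neg_re, neg_lt, neg_zero]
      rw [hsdef, hcdef, hT2]
      exact div_re_pos_aux (by linarith) hsin
    have hint : ∀ x : ℝ, Complex.exp (I * ((k : ℂ) * x - a * k / 2)) *
        mehlerKernelC ((t : ℂ) + I * φ) (x - a) x
        = ((2*(Real.pi:ℂ)*s) ^ (-(1/2):ℂ) * (2*c) ^ (-(1/2):ℂ)) *
          Complex.exp ((1 - Complex.cosh ((t:ℂ)+I*φ))/Complex.sinh ((t:ℂ)+I*φ) * (x:ℂ)^2
            + ((a:ℂ)*(Complex.cosh ((t:ℂ)+I*φ) - 1)/Complex.sinh ((t:ℂ)+I*φ) + I*k) * (x:ℂ)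
            + (-(Complex.cosh ((t:ℂ)+I*φ)) * (a:ℂ)^2/(2*Complex.sinh ((t:ℂ)+I*φ)) - I*a*k/2)) := by
      intro x
      simp only [mehlerKernelC, ← hsdef, ← hcdef]
      rw [mul_comm (Complex.exp _) _, mul_assoc, ← Complex.exp_add]
      congr 1
      push_cast
      field_simp
      ring
    have hintegral : (∫ x : ℝ, Complex.exp (I * ((k : ℂ) * x - a * k / 2)) *
          mehlerKernelC ((t : ℂ) + I * φ) (x - a) x)
        = ((2*(Real.pi:ℂ)*s) ^ (-(1/2):ℂ) * (2*c) ^ (-(1/2):ℂ)) *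
          ∫ x : ℝ, Complex.exp ((1 - Complex.cosh ((t:ℂ)+I*φ))/Complex.sinh ((t:ℂ)+I*φ) * (x:ℂ)^2
            + ((a:ℂ)*(Complex.cosh ((t:ℂ)+I*φ) - 1)/Complex.sinh ((t:ℂ)+I*φ) + I*k) * (x:ℂ)
            + (-(Complex.cosh ((t:ℂ)+I*φ)) * (a:ℂ)^2/(2*Complex.sinh ((t:ℂ)+I*φ)) - I*a*k/2)) := by
      rw [← MeasureTheory.integral_const_mul]
      exact MeasureTheory.integral_congr_ae (MeasureTheory.ae_of_all _ hint)
    rw [hintegral, integral_cexp_quadratic hbre]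
    rw [show -((1 - Complex.cosh ((t:ℂ)+I*φ)) / Complex.sinh ((t:ℂ)+I*φ)) = s/c by
      rw [hb, neg_neg]]
    rw [hS, hC, expId a k hs0 hc0 h1,
      ← mul_assoc ((2*(Real.pi:ℂ)*s) ^ (-(1/2):ℂ) * (2*c) ^ (-(1/2):ℂ)),
      prefactorA hs_im hc_im, hGdef]
  have hs00 : Complex.sinh ((((0:ℝ):ℂ) + I*φ)/2) = ((Real.sin (φ/2) : ℝ):ℂ) * I := by
    rw [show ((((0:ℝ):ℂ) + I*φ)/2) = ((φ/2 : ℝ):ℂ) * I by push_cast; ring,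
      Complex.sinh_mul_I, Complex.ofReal_sin]
  have hc00 : Complex.cosh ((((0:ℝ):ℂ) + I*φ)/2) = ((Real.cos (φ/2) : ℝ):ℂ) := by
    rw [show ((((0:ℝ):ℂ) + I*φ)/2) = ((φ/2 : ℝ):ℂ) * I by push_cast; ring,
      Complex.cosh_mul_I, Complex.ofReal_cos]
  have hsinC : ((Real.sin (φ/2) : ℝ):ℂ) ≠ 0 := by exact_mod_cast hsin.ne'
  have hsne0 : Complex.sinh ((((0:ℝ):ℂ) + I*φ)/2) ≠ 0 := by
    rw [hs00]; exact mul_ne_zero hsinC I_ne_zero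
  have hGcont : ContinuousAt G 0 := by
    have hwc : Continuous (fun t:ℝ => (((t:ℝ):ℂ) + I*(φ:ℂ))/2) :=
      ((Complex.continuous_ofReal).add continuous_const).div_const 2
    have hssc : Continuous (fun t:ℝ => Complex.sinh ((((t:ℝ):ℂ) + I*(φ:ℂ))/2)) :=
      Complex.continuous_sinh.comp hwc
    have hccc : Continuous (fun t:ℝ => Complex.cosh ((((t:ℝ):ℂ) + I*(φ:ℂ))/2)) :=
      Complex.continuous_cosh.comp hwc
    rw [hGdef]
    apply ContinuousAt.mul continuousAt_const
    apply ContinuousAt.mul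
    · apply ContinuousAt.inv₀ (continuous_const.mul hssc).continuousAt
      simpa using hsne0
    · apply ContinuousAt.cexp
      apply ContinuousAt.div ((continuous_const.mul hccc).continuousAt)
        ((continuous_const.mul hssc).continuousAt)
      simpa using hsne0
  have hexpo : -((a:ℂ)^2 + (k:ℂ)^2) * ((Real.cos (φ/2) : ℝ):ℂ)
        / (4 * (((Real.sin (φ/2) : ℝ):ℂ) * I))
      = I / 4 * ((a:ℂ)^2 + (k:ℂ)^2) * ((Real.cos (φ/2) / Real.sin (φ/2) : ℝ):ℂ) := by
    have hI := Complex.I_sq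
    rw [Complex.ofReal_div,
      show I / 4 * ((a:ℂ)^2 + (k:ℂ)^2) * (((Real.cos (φ/2):ℝ):ℂ) / ((Real.sin (φ/2):ℝ):ℂ))
        = (I * ((a:ℂ)^2 + (k:ℂ)^2) * ((Real.cos (φ/2):ℝ):ℂ)) / (4 * ((Real.sin (φ/2):ℝ):ℂ))
        from by ring,
      div_eq_div_iff (mul_ne_zero (by norm_num) (mul_ne_zero hsinC Complex.I_ne_zero))
        (mul_ne_zero (by norm_num) hsinC)]
    linear_combination (-4*((a:ℂ)^2 + (k:ℂ)^2) * ((Real.cos (φ/2):ℝ):ℂ) * ((Real.sin (φ/2):ℝ):ℂ)) * hI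
  have hG0 : G 0 = (1 - Complex.exp (-I * φ))⁻¹ *
      Complex.exp ((I / 4) * ((a : ℂ) ^ 2 + (k : ℂ) ^ 2) *
        ((Real.cos (φ / 2) / Real.sin (φ / 2) : ℝ) : ℂ)) := by
    rw [hGdef]
    simp only [hs00, hc00]
    have hA : Complex.exp (I * (φ:ℂ) / 2) * Complex.exp (-(I * (φ:ℂ) / 2)) = 1 := by
      rw [← Complex.exp_add]; simp
    have hBB : Complex.exp (-(I * (φ:ℂ) / 2)) * Complex.exp (-(I * (φ:ℂ) / 2))
        = Complex.exp (-I * φ) := by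
      rw [← Complex.exp_add]; congr 1; ring
    have hsin_exp : ((Real.sin (φ/2) : ℝ):ℂ)
        = (Complex.exp (-(I * (φ:ℂ) / 2)) - Complex.exp (I * (φ:ℂ) / 2)) * I / 2 := by
      rw [Complex.ofReal_sin, Complex.sin,
        show (-(((φ/2:ℝ)):ℂ) * I) = -(I * (φ:ℂ) / 2) by push_cast; ring,
        show ((((φ/2:ℝ)):ℂ) * I) = I * (φ:ℂ) / 2 by push_cast; ring]
    set A := Complex.exp (I * (φ:ℂ) / 2) with hAdef
    set B := Complex.exp (-(I * (φ:ℂ) / 2)) with hBdef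
    have h2s : 2 * (((Real.sin (φ/2) : ℝ):ℂ) * I) = A - B := by
      rw [hsin_exp]
      linear_combination (B - A) * Complex.I_sq
    have hABne : A - B ≠ 0 := by
      rw [← h2s]; exact mul_ne_zero two_ne_zero (mul_ne_zero hsinC I_ne_zero)
    have hfact : (1:ℂ) - Complex.exp (-I * φ) = B * (A - B) := by
      rw [← hBB]; linear_combination -hA
    have hfac : A * (2 * (((Real.sin (φ/2) : ℝ):ℂ) * I))⁻¹
        = (1 - Complex.exp (-I * φ))⁻¹ := by
      rw [h2s, hfact, mul_inv, inv_eq_of_mul_eq_one_left hA]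
    rw [← mul_assoc, hfac, hexpo]
  have hlim : Tendsto G (nhdsWithin 0 (Set.Ioi 0)) (nhds (G 0)) :=
    hGcont.continuousWithinAt
  rw [hG0] at hlim
  refine Tendsto.congr' ?_ hlim
  filter_upwards [self_mem_nhdsWithin] with t ht
  exact (key t ht).symm
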